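/- Let K be a field, A a commutative K-algebra, and let π₁ : K[X_1,…,X_{N₁}] →ₐ A and π₂ : K[Y_1,…,Y_{N₂}] →ₐ A be two surjective K-algebra homomorphisms. Let φ : A →ₐ A be a K-algebra endomorphism of A. Then limsup_{n→∞} (1/n)·log deg(φⁿ;π₁) = limsup_{n→∞} (1/n)·log deg(φⁿ;π₂); that is, the algebraic entropy of φ relative to π₁ equals the algebraic entropy of φ relative to π₂. -/

import Mathlib

open MvPolynomial Filter

lemma totalDegree_aeval_le' {R σ τ : Type*} [CommSemiring R]
    (q : σ → MvPolynomial τ R) (d : ℕ) (hq : ∀ i, (q i).totalDegree ≤ d)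
    (p : MvPolynomial σ R) :
    (MvPolynomial.aeval q p).totalDegree ≤ p.totalDegree * d := by
  classical
  conv_lhs => rw [p.as_sum, map_sum]
  refine (MvPolynomial.totalDegree_finset_sum _ _).trans (Finset.sup_le fun m hm => ?_)
  rw [MvPolynomial.aeval_monomial]
  refine (MvPolynomial.totalDegree_mul _ _).trans ?_
  have h1 : (algebraMap R (MvPolynomial τ R) (p.coeff m)).totalDegree = 0 := by
    rw [MvPolynomial.algebraMap_eq, MvPolynomial.totalDegree_C]
  rw [h1, zero_add]
  rw [Finsupp.prod]
  refine (MvPolynomial.totalDegree_finset_prod _ _).trans ?_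
  calc ∑ i ∈ m.support, (q i ^ m i).totalDegree
      ≤ ∑ i ∈ m.support, m i * d := by
        refine Finset.sum_le_sum fun i _ => ?_
        exact (MvPolynomial.totalDegree_pow _ _).trans
          (by exact Nat.mul_le_mul_left _ (hq i))
    _ = (∑ i ∈ m.support, m i) * d := by rw [Finset.sum_mul]
    _ ≤ p.totalDegree * d := Nat.mul_le_mul_right _ (MvPolynomial.le_totalDegree hm)

/-- The degree of a `K`-algebra endomorphism `φ` of `A` relative to a presentation
`π : K[X_1,…,X_N] →ₐ A`: the least `d` such that there is a tuple of polynomials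
`q_j` of total degree at most `d` with `π (q j) = φ (π (X j))` for all `j`. -/
noncomputable def relDeg {K A : Type*} [Field K] [CommRing A] [Algebra K A] {N : ℕ}
    (φ : A →ₐ[K] A) (π : MvPolynomial (Fin N) K →ₐ[K] A) : ℕ :=
  sInf {d : ℕ | ∃ q : Fin N → MvPolynomial (Fin N) K,
    (∀ j, π (q j) = φ (π (MvPolynomial.X j))) ∧ ∀ j, (q j).totalDegree ≤ d}

/-- The algebraic entropy of `φ` relative to the presentation `π`. -/
noncomputable def relEntropy {K A : Type*} [Field K] [CommRing A] [Algebra K A] {N : ℕ}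
    (φ : A →ₐ[K] A) (π : MvPolynomial (Fin N) K →ₐ[K] A) : EReal :=
  Filter.atTop.limsup fun n : ℕ => ((Real.log (relDeg (φ ^ n) π) / n : ℝ) : EReal)

lemma relDeg_le_mul {K A : Type*} [Field K] [CommRing A] [Algebra K A] {N₁ N₂ : ℕ}
    (π₁ : MvPolynomial (Fin N₁) K →ₐ[K] A) (hπ₁ : Function.Surjective π₁)
    (π₂ : MvPolynomial (Fin N₂) K →ₐ[K] A) (hπ₂ : Function.Surjective π₂) :
    ∃ M : ℕ, ∀ ψ : A →ₐ[K] A, relDeg ψ π₁ ≤ M * relDeg ψ π₂ := by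
  classical
  choose P hP using fun i : Fin N₁ => hπ₂ (π₁ (X i))
  choose Q hQ using fun j : Fin N₂ => hπ₁ (π₂ (X j))
  set C := Finset.univ.sup fun i : Fin N₁ => (P i).totalDegree with hC
  set C' := Finset.univ.sup fun j : Fin N₂ => (Q j).totalDegree with hC'
  refine ⟨C * C', fun ψ => ?_⟩
  have hne : {d : ℕ | ∃ q : Fin N₂ → MvPolynomial (Fin N₂) K,
      (∀ j, π₂ (q j) = ψ (π₂ (MvPolynomial.X j))) ∧ ∀ j, (q j).totalDegree ≤ d}.Nonempty := by
    choose p hp using fun j : Fin N₂ => hπ₂ (ψ (π₂ (X j)))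
    exact ⟨Finset.univ.sup fun j => (p j).totalDegree, p, hp,
      fun j => Finset.le_sup (f := fun j => (p j).totalDegree) (Finset.mem_univ j)⟩
  obtain ⟨p, hp, hpd⟩ : relDeg ψ π₂ ∈ {d : ℕ | ∃ q : Fin N₂ → MvPolynomial (Fin N₂) K,
      (∀ j, π₂ (q j) = ψ (π₂ (MvPolynomial.X j))) ∧ ∀ j, (q j).totalDegree ≤ d} :=
    Nat.sInf_mem hne
  refine Nat.sInf_le ⟨fun i => aeval Q (aeval p (P i)), fun i => ?_, fun i => ?_⟩
  · have h1 : π₁.comp (aeval Q) = π₂ := by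
      apply MvPolynomial.algHom_ext; intro j; simp [hQ]
    have h2 : π₂.comp (aeval p) = ψ.comp π₂ := by
      apply MvPolynomial.algHom_ext; intro j; simp [hp]
    calc π₁ (aeval Q (aeval p (P i))) = (π₁.comp (aeval Q)) (aeval p (P i)) := rfl
      _ = π₂ (aeval p (P i)) := by rw [h1]
      _ = (π₂.comp (aeval p)) (P i) := rfl
      _ = ψ (π₂ (P i)) := by rw [h2]; rfl
      _ = ψ (π₁ (X i)) := by rw [hP]
  · have hd1 : (aeval p (P i)).totalDegree ≤ C * relDeg ψ π₂ :=
      le_trans (totalDegree_aeval_le' p _ hpd (P i))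
        (Nat.mul_le_mul_right _ (Finset.le_sup (f := fun i => (P i).totalDegree) (Finset.mem_univ i)))
    calc (aeval Q (aeval p (P i))).totalDegree
        ≤ (aeval p (P i)).totalDegree * C' :=
          totalDegree_aeval_le' Q C' (fun j => Finset.le_sup (f := fun j => (Q j).totalDegree) (Finset.mem_univ j)) _
      _ ≤ C * relDeg ψ π₂ * C' := Nat.mul_le_mul_right _ hd1
      _ = C * C' * relDeg ψ π₂ := by ring

lemma limsup_log_div_le {f g : ℕ → ℕ} {M : ℕ} (h : ∀ n, f n ≤ M * g n) :
    atTop.limsup (fun n : ℕ => ((Real.log (f n) / n : ℝ) : EReal)) ≤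
      atTop.limsup (fun n : ℕ => ((Real.log (g n) / n : ℝ) : EReal)) := by
  have hlog : ∀ n, Real.log (f n) ≤ Real.log M + Real.log (g n) := by
    intro n
    rcases Nat.eq_zero_or_pos (f n) with hf | hf
    · rw [hf]
      simp only [Nat.cast_zero, Real.log_zero]
      exact add_nonneg (Real.log_natCast_nonneg M) (Real.log_natCast_nonneg (g n))
    · have hg : 0 < g n := by
        rcases Nat.eq_zero_or_pos (g n) with hg | hg
        · exfalso; have := h n; rw [hg, Nat.mul_zero] at this; omega
        · exact hg
      have hM : 0 < M := by
        rcases Nat.eq_zero_or_pos M with hM | hM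
        · exfalso; have := h n; rw [hM, Nat.zero_mul] at this; omega
        · exact hM
      have : Real.log (f n) ≤ Real.log ((M : ℝ) * (g n : ℝ)) := by
        apply Real.log_le_log (by exact_mod_cast hf)
        exact_mod_cast h n
      rwa [Real.log_mul (by exact_mod_cast hM.ne') (by exact_mod_cast hg.ne')] at this
  have key : ∀ n : ℕ, (Real.log (f n) / n : ℝ) ≤ Real.log M / n + Real.log (g n) / n := by
    intro n
    rw [← add_div]
    rcases Nat.eq_zero_or_pos n with hn | hn
    · simp [hn]
    · have hn' : (0:ℝ) < n := by exact_mod_cast hn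
      exact div_le_div_of_nonneg_right (hlog n) hn'.le
  have keyE : ∀ n : ℕ, ((Real.log (f n) / n : ℝ) : EReal) ≤
      ((fun n : ℕ => ((Real.log M / n : ℝ) : EReal)) +
       (fun n : ℕ => ((Real.log (g n) / n : ℝ) : EReal))) n := by
    intro n
    simp only [Pi.add_apply, ← EReal.coe_add]
    exact_mod_cast key n
  have hMlim : atTop.limsup (fun n : ℕ => ((Real.log M / n : ℝ) : EReal)) = 0 := by
    have h1 : Tendsto (fun n : ℕ => (Real.log M / n : ℝ)) atTop (nhds 0) :=
      tendsto_const_div_atTop_nhds_zero_nat _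
    have h2 : Tendsto (fun n : ℕ => ((Real.log M / n : ℝ) : EReal)) atTop (nhds (0 : EReal)) := by
      rw [show ((0 : EReal)) = ((0 : ℝ) : EReal) from rfl]
      exact EReal.tendsto_coe.mpr h1
    exact h2.limsup_eq
  calc atTop.limsup (fun n : ℕ => ((Real.log (f n) / n : ℝ) : EReal))
      ≤ atTop.limsup ((fun n : ℕ => ((Real.log M / n : ℝ) : EReal)) +
          (fun n : ℕ => ((Real.log (g n) / n : ℝ) : EReal))) :=
        Filter.limsup_le_limsup (Filter.Eventually.of_forall keyE)
    _ ≤ atTop.limsup (fun n : ℕ => ((Real.log M / n : ℝ) : EReal)) +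
          atTop.limsup (fun n : ℕ => ((Real.log (g n) / n : ℝ) : EReal)) :=
        EReal.limsup_add_le (Or.inl (by rw [hMlim]; exact fun h => by simp at h))
          (Or.inl (by rw [hMlim]; exact fun h => by simp at h))
    _ = atTop.limsup (fun n : ℕ => ((Real.log (g n) / n : ℝ) : EReal)) := by
        rw [hMlim, zero_add]

theorem relEntropy_independent_of_presentation {K A : Type*} [Field K] [CommRing A]
    [Algebra K A] {N₁ N₂ : ℕ}
    (π₁ : MvPolynomial (Fin N₁) K →ₐ[K] A) (hπ₁ : Function.Surjective π₁)
    (π₂ : MvPolynomial (Fin N₂) K →ₐ[K] A) (hπ₂ : Function.Surjective π₂)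
    (φ : A →ₐ[K] A) :
    relEntropy φ π₁ = relEntropy φ π₂ := by
  obtain ⟨M₁, hM₁⟩ := relDeg_le_mul π₁ hπ₁ π₂ hπ₂
  obtain ⟨M₂, hM₂⟩ := relDeg_le_mul π₂ hπ₂ π₁ hπ₁
  exact le_antisymm (limsup_log_div_le fun n => hM₁ (φ ^ n))
    (limsup_log_div_le fun n => hM₂ (φ ^ n))
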